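/- Consider the saw map setup with the assumption 'q_k + e_k/α_{k−1} > p_k for 1 ≤ k ≤ k* − 1' dropped, and assume additionally that all the local maximum points of the graph lie on a common straight line of slope in (0,1): there exist a ∈ ℝ and m with 0 < m < 1 such that p_k = a + m·r_k for all k ≥ 0. Then q_k + e_k/α_k > T(r_k) = p_k for all k with 1 ≤ k < k*. (In particular, since α_k > α_{k−1}, the dropped assumption q_k + e_k/α_{k−1} > p_k holds for all 1 ≤ k ≤ k* − 1.) -/
import Mathlib


/-- `T` is affine (linear) on the segment `[a, b]`. -/
def AffOn (T : ℝ → ℝ) (a b : ℝ) : Prop :=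
  ∃ m c : ℝ, ∀ x ∈ Set.Icc a b, T x = m * x + c

/-- The "saw map" setup: sequences `q, r, p`, the map `T`, fixed points `e k ∈ (q (k+1), r k)`
and `ehat k ∈ (r k, q k)`, and the index `kstar`, subject to all standing assumptions. -/
structure SawMapSetup where
  q : ℕ → ℝ
  r : ℕ → ℝ
  p : ℕ → ℝ
  T : ℝ → ℝ
  e : ℕ → ℝ
  ehat : ℕ → ℝ
  kstar : ℕ
  hq_pos : ∀ k, 1 ≤ k → 0 < q k
  hr_pos : ∀ k, 0 < r k
  hq1r0 : q 1 < r 0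
  hrq : ∀ k, 1 ≤ k → r k < q k
  hqr : ∀ k, 1 ≤ k → q (k + 1) < r k
  hq_lim : Filter.Tendsto q Filter.atTop (nhds 0)
  hr_lim : Filter.Tendsto r Filter.atTop (nhds 0)
  hp_pos : ∀ k, 0 < p k
  hp_dec : ∀ k, p (k + 1) < p k
  hp0r0 : p 0 < r 0
  hpr : ∀ k, 1 ≤ k → r k < p k
  hT0 : T 0 = 0
  hTq : ∀ k, 1 ≤ k → T (q k) = 0
  hTr : ∀ k, T (r k) = p k
  haff0 : AffOn T (q 1) (r 0)
  haff1 : ∀ k, 1 ≤ k → AffOn T (q (k + 1)) (r k)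
  haff2 : ∀ k, 1 ≤ k → AffOn T (r k) (q k)
  hTJ : Set.MapsTo T (Set.Icc 0 (r 0)) (Set.Icc 0 (r 0))
  halpha1 : ∀ k, 1 ≤ k → 1 < p k / (r k - q (k + 1))
  he_mem : ∀ k, 1 ≤ k → e k ∈ Set.Ioo (q (k + 1)) (r k)
  he_fix : ∀ k, 1 ≤ k → T (e k) = e k
  he_uniq : ∀ k, 1 ≤ k → ∀ x ∈ Set.Ioo (q (k + 1)) (r k), T x = x → x = e k
  hehat_mem : ∀ k, 1 ≤ k → ehat k ∈ Set.Ioo (r k) (q k)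
  hehat_fix : ∀ k, 1 ≤ k → T (ehat k) = ehat k
  hehat_uniq : ∀ k, 1 ≤ k → ∀ x ∈ Set.Ioo (r k) (q k), T x = x → x = ehat k
  halpha_mono : ∀ k, p k / (r k - q (k + 1)) < p (k + 1) / (r (k + 1) - q (k + 2))
  hbeta_mono : ∀ k, 1 ≤ k → p k / (q k - r k) < p (k + 1) / (q (k + 1) - r (k + 1))
  hkstar : 1 ≤ kstar
  hp_e_big : ∀ k, kstar + 1 ≤ k → e (k - 1) < p k
  hp_e_small : 2 ≤ kstar → ∀ k, 2 ≤ k → k ≤ kstar → p k < e (k - 1)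

namespace SawMapSetup

variable (S : SawMapSetup)

/-- Absolute value of the slope of `T` on `[q (k+1), r k]`. -/
noncomputable def alpha (k : ℕ) : ℝ := S.p k / (S.r k - S.q (k + 1))

/-- Absolute value of the slope of `T` on `[r k, q k]`. -/
noncomputable def beta (k : ℕ) : ℝ := S.p k / (S.q k - S.r k)

/-- The invariant segment `J* = [0, p kstar]`. -/
def Jstar : Set ℝ := Set.Icc 0 (S.p S.kstar)

/-- The segment `J_k = [e k, p k]`. -/
def Jk (k : ℕ) : Set ℝ := Set.Icc (S.e k) (S.p k)

/-- The segment `G_k = [T (p k), p k]`. -/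
def Gk (k : ℕ) : Set ℝ := Set.Icc (S.T (S.p k)) (S.p k)

/-- The set `Ω` of points of `J*` that are eventually mapped to `0`. -/
def Omega : Set ℝ := {x | x ∈ S.Jstar ∧ ∃ n, 1 ≤ n ∧ S.T^[n] x = 0}

/-- The set `Σ`, the closure of `Ω`. -/
def Sig : Set ℝ := closure S.Omega

end SawMapSetup

/-- Saw map setup (without the technical condition), assuming additionally that all local
maximum points `(r k, p k)` of the graph lie on a common straight line `p = a + m·r` of
slope `m ∈ (0, 1)`: then `q k + e k / α k > T (r k) = p k` for all `1 ≤ k < kstar`. -/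
theorem technical_condition_automatic (S : SawMapSetup) (a m : ℝ)
    (hm0 : 0 < m) (hm1 : m < 1)
    (hline : ∀ k, S.p k = a + m * S.r k) :
    ∀ k, 1 ≤ k → k < S.kstar →
      S.T (S.r k) = S.p k ∧ S.p k < S.q k + S.e k / S.alpha k := by
  intro k hk hklt
  refine ⟨S.hTr k, ?_⟩
  have hk1 : 1 ≤ k + 1 := by omega
  have hq1r : S.q (k + 1) < S.r k := S.hqr k hk
  have hrq1 : S.r (k + 1) < S.q (k + 1) := S.hrq (k + 1) hk1
  have hrqk : S.r k < S.q k := S.hrq k hk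
  have hrr : S.r (k + 1) < S.r k := lt_trans hrq1 hq1r
  -- e k / alpha k = e k - q (k+1)
  obtain ⟨m', c, haff⟩ := S.haff1 k hk
  obtain ⟨heq1, her⟩ := S.he_mem k hk
  have hA : m' * S.q (k + 1) + c = 0 := by
    rw [← haff _ ⟨le_refl _, le_of_lt hq1r⟩]; exact S.hTq (k + 1) hk1
  have hB : m' * S.r k + c = S.p k := by
    rw [← haff _ ⟨le_of_lt hq1r, le_refl _⟩]; exact S.hTr k
  have hC : m' * S.e k + c = S.e k := by
    rw [← haff _ ⟨le_of_lt heq1, le_of_lt her⟩]; exact S.he_fix k hk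
  have hdpos : 0 < S.r k - S.q (k + 1) := by linarith
  have hm' : m' = S.alpha k := by
    have : m' * (S.r k - S.q (k + 1)) = S.p k := by linear_combination hB - hA
    rw [SawMapSetup.alpha, ← this, mul_div_assoc, div_self (ne_of_gt hdpos), mul_one]
  have hαpos : 0 < S.alpha k := by
    have := S.halpha1 k hk
    rw [SawMapSetup.alpha]; linarith
  have hediv : S.e k / S.alpha k = S.e k - S.q (k + 1) := by
    rw [← hm']
    have hm'ne : m' ≠ 0 := by rw [hm']; exact ne_of_gt hαpos
    field_simp
    nlinarith [hA, hC]
  rw [hediv]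
  -- p (k+1) < e k
  have hkstar2 : 2 ≤ S.kstar := by omega
  have hpe : S.p (k + 1) < S.e k := by
    have := S.hp_e_small hkstar2 (k + 1) (by omega) (by omega)
    simpa using this
  -- gaps q - r decrease
  have hd1 : 0 < S.q k - S.r k := by linarith
  have hd2 : 0 < S.q (k + 1) - S.r (k + 1) := by linarith
  have hbeta := S.hbeta_mono k hk
  have hp1pos := S.hp_pos (k + 1)
  have hpdec := S.hp_dec k
  have hgap : S.q (k + 1) - S.r (k + 1) < S.q k - S.r k := by
    rw [div_lt_div_iff₀ hd1 hd2] at hbeta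
    nlinarith
  -- the line condition
  have hl1 := hline k
  have hl2 := hline (k + 1)
  have hmr : m * (S.r k - S.r (k + 1)) < S.r k - S.r (k + 1) := by
    nlinarith
  linarith
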